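/- The three sequences V₁(n) = ⌊nφ⌋ + n − 1, V₂(n) = 2⌊nφ⌋ + n, and V₃(n) = ⌊nφ⌋ + n, each for n ≥ 1, form a complementary triple: their value sets are pairwise disjoint and their union is the set of all positive integers. -/

import Mathlib

noncomputable def phi : ℝ := (1 + Real.sqrt 5) / 2

/-- Three sequences (indexed by `n ≥ 1`) form a complementary triple if their value sets
are pairwise disjoint and their union is the set of positive integers. -/
def ComplementaryTriple (V₁ V₂ V₃ : ℕ → ℤ) : Prop :=
  Disjoint {z : ℤ | ∃ n : ℕ, 1 ≤ n ∧ V₁ n = z} {z : ℤ | ∃ n : ℕ, 1 ≤ n ∧ V₂ n = z} ∧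
  Disjoint {z : ℤ | ∃ n : ℕ, 1 ≤ n ∧ V₁ n = z} {z : ℤ | ∃ n : ℕ, 1 ≤ n ∧ V₃ n = z} ∧
  Disjoint {z : ℤ | ∃ n : ℕ, 1 ≤ n ∧ V₂ n = z} {z : ℤ | ∃ n : ℕ, 1 ≤ n ∧ V₃ n = z} ∧
  {z : ℤ | ∃ n : ℕ, 1 ≤ n ∧ V₁ n = z} ∪ {z : ℤ | ∃ n : ℕ, 1 ≤ n ∧ V₂ n = z} ∪
    {z : ℤ | ∃ n : ℕ, 1 ≤ n ∧ V₃ n = z} = {z : ℤ | 0 < z}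

lemma phi_sq : phi * phi = phi + 1 := by
  have h : Real.sqrt 5 * Real.sqrt 5 = 5 := Real.mul_self_sqrt (by norm_num)
  unfold phi; linear_combination h / 4

lemma two_le_sqrt5 : (2:ℝ) ≤ Real.sqrt 5 := by
  nlinarith [Real.mul_self_sqrt (show (0:ℝ) ≤ 5 by norm_num), Real.sqrt_nonneg 5]

lemma one_lt_phi : 1 < phi := by unfold phi; linarith [two_le_sqrt5]

lemma phi_pos : 0 < phi := lt_trans one_pos one_lt_phi

lemma irr_phi : Irrational phi := by
  have h5 : Irrational (Real.sqrt 5) := (by norm_num : Nat.Prime 5).irrational_sqrt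
  have h1 : Irrational ((1:ℚ) + Real.sqrt 5) := h5.ratCast_add 1
  have := h1.div_intCast (by norm_num : (2:ℤ) ≠ 0)
  unfold phi
  convert this using 2 <;> norm_num

lemma phi_conj : phi.HolderConjugate (phi + 1) := by
  have h1 : phi ≠ 0 := ne_of_gt phi_pos
  have h2 : phi + 1 ≠ 0 := by nlinarith [phi_pos]
  constructor
  · rw [inv_one]; field_simp
    linarith [phi_sq]
  · exact phi_pos
  · linarith [phi_pos]

/-- from `0 < x * phi` conclude `0 < x` -/
lemma pos_of_mul_phi {x : ℝ} (h : 0 < x * phi) : 0 < x := by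
  rcases mul_pos_iff.mp h with ⟨hx, _⟩ | ⟨_, hp⟩
  · exact hx
  · linarith [phi_pos]

/-- strict lower bound on `k * phi` -/
lemma floor_lt_mul (k : ℤ) (hk : k ≠ 0) : (⌊(k:ℝ) * phi⌋ : ℝ) < (k:ℝ) * phi := by
  refine (Int.floor_le _).lt_of_ne fun h => ?_
  exact (irr_phi.intCast_mul hk).ne_int ⌊(k:ℝ) * phi⌋ h.symm

lemma floor_pos_phi (k : ℤ) (hk : 0 < k) : 1 ≤ ⌊(k:ℝ) * phi⌋ := by
  rw [Int.le_floor]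
  push_cast
  nlinarith [one_lt_phi, (by exact_mod_cast hk : (0:ℤ) < k), (by exact_mod_cast hk : (1:ℝ) ≤ (k:ℝ))]

/-- identity I1: `⌊⌊kφ⌋φ⌋ = ⌊kφ⌋ + k - 1` -/
lemma I1 (k : ℤ) (hk : 0 < k) :
    ⌊((⌊(k:ℝ) * phi⌋ : ℤ) : ℝ) * phi⌋ = ⌊(k:ℝ) * phi⌋ + k - 1 := by
  set a : ℤ := ⌊(k:ℝ) * phi⌋ with ha
  have h1 : (a:ℝ) < (k:ℝ) * phi := floor_lt_mul k (ne_of_gt hk)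
  have h2 : (k:ℝ) * phi < a + 1 := Int.lt_floor_add_one _
  have h1' := one_lt_phi
  -- lower bound
  have e1 : ((a:ℝ) * phi - ((a:ℝ) + k - 1)) * phi = (a:ℝ) - k * phi + phi := by
    linear_combination (a:ℝ) * phi_sq
  have low : (0:ℝ) < (a:ℝ) * phi - ((a:ℝ) + k - 1) :=
    pos_of_mul_phi (by rw [e1]; linarith)
  -- upper bound
  have e2 : (((a:ℝ) + k) - (a:ℝ) * phi) * phi = (k:ℝ) * phi - a := by
    linear_combination (-(a:ℝ)) * phi_sq
  have high : (0:ℝ) < ((a:ℝ) + k) - (a:ℝ) * phi :=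
    pos_of_mul_phi (by rw [e2]; linarith)
  rw [Int.floor_eq_iff] <;> constructor
  · push_cast; linarith
  · push_cast; linarith

/-- identity I2: `⌊(⌊kφ⌋+k)φ⌋ = 2⌊kφ⌋ + k` -/
lemma I2 (k : ℤ) (hk : 0 < k) :
    ⌊((⌊(k:ℝ) * phi⌋ + k : ℤ) : ℝ) * phi⌋ = 2 * ⌊(k:ℝ) * phi⌋ + k := by
  set a : ℤ := ⌊(k:ℝ) * phi⌋ with ha
  have h1 : (a:ℝ) < (k:ℝ) * phi := floor_lt_mul k (ne_of_gt hk)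
  have h2 : (k:ℝ) * phi < a + 1 := Int.lt_floor_add_one _
  have h1' := one_lt_phi
  have hp := phi_pos
  -- t := a + k - a*phi satisfies t*phi = k*phi - a ∈ (0,1), hence 0 < t < 1
  have e0 : (((a:ℝ) + k) - (a:ℝ) * phi) * phi = (k:ℝ) * phi - a := by
    linear_combination (-(a:ℝ)) * phi_sq
  have t_pos : (0:ℝ) < ((a:ℝ) + k) - (a:ℝ) * phi :=
    pos_of_mul_phi (by rw [e0]; linarith)
  have t_lt : ((a:ℝ) + k) - (a:ℝ) * phi < 1 := by
    nlinarith [mul_pos t_pos (sub_pos.mpr h1')]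
  -- lower: ((a+k)*phi - (2a+k)) * phi = a + k - a*phi > 0
  have e1 : (((a:ℝ) + k) * phi - (2 * (a:ℝ) + k)) * phi = ((a:ℝ) + k) - (a:ℝ) * phi := by
    linear_combination ((a:ℝ) + (k:ℝ)) * phi_sq
  have low : (0:ℝ) < ((a:ℝ) + k) * phi - (2 * (a:ℝ) + k) :=
    pos_of_mul_phi (by rw [e1]; linarith)
  -- upper: ((2a+k+1) - (a+k)*phi) * phi = phi - (a + k - a*phi) > 0
  have e2 : ((2 * (a:ℝ) + k + 1 - ((a:ℝ) + k) * phi)) * phi = phi - (((a:ℝ) + k) - (a:ℝ) * phi) := by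
    linear_combination (-(a:ℝ) - (k:ℝ)) * phi_sq
  have high : (0:ℝ) < 2 * (a:ℝ) + k + 1 - ((a:ℝ) + k) * phi :=
    pos_of_mul_phi (by rw [e2]; linarith)
  rw [Int.floor_eq_iff] <;> constructor
  · push_cast; linarith
  · push_cast; linarith

/-- `k ↦ ⌊kφ⌋` is strictly monotone, hence injective -/
lemma floor_phi_strictMono : StrictMono (fun k : ℤ => ⌊(k:ℝ) * phi⌋) := by
  intro m n hmn
  simp only
  have hmn' : (m:ℝ) + 1 ≤ (n:ℝ) := by exact_mod_cast hmn
  have h : (m:ℝ) * phi + 1 ≤ (n:ℝ) * phi := by nlinarith [phi_pos, one_lt_phi]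
  calc ⌊(m:ℝ) * phi⌋ < ⌊(m:ℝ) * phi⌋ + 1 := by omega
    _ = ⌊(m:ℝ) * phi + 1⌋ := (Int.floor_add_one _).symm
    _ ≤ ⌊(n:ℝ) * phi⌋ := Int.floor_le_floor h

/-- Exactly-one form of Rayleigh for φ: every positive integer is `⌊kφ⌋` xor `⌊kφ⌋ + k`. -/
lemma rayleigh_phi (z : ℤ) (hz : 0 < z) :
    ((∃ k : ℤ, 0 < k ∧ ⌊(k:ℝ) * phi⌋ = z) ∧ ¬(∃ k : ℤ, 0 < k ∧ ⌊(k:ℝ) * phi⌋ + k = z)) ∨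
    ((∃ k : ℤ, 0 < k ∧ ⌊(k:ℝ) * phi⌋ + k = z) ∧ ¬(∃ k : ℤ, 0 < k ∧ ⌊(k:ℝ) * phi⌋ = z)) := by
  have hR := Irrational.beattySeq_symmDiff_beattySeq_pos phi_conj irr_phi
  have hz' : z ∈ ({n : ℤ | 0 < n}) := hz
  rw [← hR, Set.mem_symmDiff] at hz'
  have e1 : {x : ℤ | ∃ k > 0, beattySeq phi k = x} = {x : ℤ | ∃ k : ℤ, 0 < k ∧ ⌊(k:ℝ) * phi⌋ = x} := by
    ext x; simp [beattySeq]
  have e2 : {x : ℤ | ∃ k > 0, beattySeq (phi + 1) k = x}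
      = {x : ℤ | ∃ k : ℤ, 0 < k ∧ ⌊(k:ℝ) * phi⌋ + k = x} := by
    ext x
    simp only [beattySeq, Set.mem_setOf_eq]
    constructor
    · rintro ⟨k, hk, rfl⟩
      exact ⟨k, hk, by rw [mul_add, mul_one, Int.floor_add_intCast]⟩
    · rintro ⟨k, hk, rfl⟩
      exact ⟨k, hk, by rw [mul_add, mul_one, Int.floor_add_intCast]⟩
  rw [e1, e2] at hz'
  exact hz'

/-- The first classical complementary triple:
`(⌊nφ⌋ + n − 1, 2⌊nφ⌋ + n, ⌊nφ⌋ + n)` for `n ≥ 1`. -/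
theorem first_classical_triple :
    ComplementaryTriple
      (fun n => ⌊(n : ℝ) * phi⌋ + n - 1)
      (fun n => 2 * ⌊(n : ℝ) * phi⌋ + n)
      (fun n => ⌊(n : ℝ) * phi⌋ + n) := by
  -- membership in A / B for the three sequences
  have castR : ∀ n : ℕ, ((n:ℤ) : ℝ) = (n : ℝ) := fun n => by push_cast; ring
  have hV1 : ∀ n : ℕ, 1 ≤ n → ∃ m : ℤ, 0 < m ∧ ⌊(m:ℝ) * phi⌋ = ⌊(n : ℝ) * phi⌋ + n - 1 := by
    intro n hn
    have hk : 0 < (n:ℤ) := by exact_mod_cast hn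
    refine ⟨⌊((n:ℤ):ℝ) * phi⌋, by linarith [floor_pos_phi (n:ℤ) hk], ?_⟩
    rw [I1 (n:ℤ) hk, castR]
  have hV2 : ∀ n : ℕ, 1 ≤ n → ∃ m : ℤ, 0 < m ∧ ⌊(m:ℝ) * phi⌋ = 2 * ⌊(n : ℝ) * phi⌋ + n := by
    intro n hn
    have hk : 0 < (n:ℤ) := by exact_mod_cast hn
    refine ⟨⌊((n:ℤ):ℝ) * phi⌋ + (n:ℤ), by linarith [floor_pos_phi (n:ℤ) hk], ?_⟩
    rw [I2 (n:ℤ) hk, castR]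
  have hV3 : ∀ n : ℕ, 1 ≤ n → ∃ m : ℤ, 0 < m ∧ ⌊(m:ℝ) * phi⌋ + m = ⌊(n : ℝ) * phi⌋ + n := by
    intro n hn
    have hk : 0 < (n:ℤ) := by exact_mod_cast hn
    exact ⟨(n:ℤ), hk, by rw [castR]⟩
  -- values are positive
  have hpos1 : ∀ n : ℕ, 1 ≤ n → 0 < ⌊(n : ℝ) * phi⌋ + (n:ℤ) - 1 := by
    intro n hn
    have hk : 0 < (n:ℤ) := by exact_mod_cast hn
    have := floor_pos_phi (n:ℤ) hk
    rw [castR] at this; omega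
  have hpos2 : ∀ n : ℕ, 1 ≤ n → 0 < 2 * ⌊(n : ℝ) * phi⌋ + (n:ℤ) := by
    intro n hn
    have hk : 0 < (n:ℤ) := by exact_mod_cast hn
    have := floor_pos_phi (n:ℤ) hk
    rw [castR] at this; omega
  have hpos3 : ∀ n : ℕ, 1 ≤ n → 0 < ⌊(n : ℝ) * phi⌋ + (n:ℤ) := by
    intro n hn
    have hk : 0 < (n:ℤ) := by exact_mod_cast hn
    have := floor_pos_phi (n:ℤ) hk
    rw [castR] at this; omega
  refine ⟨?_, ?_, ?_, ?_⟩
  · -- V1 vs V2 : both are ⌊mφ⌋ with A-index vs B-index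
    rw [Set.disjoint_left]
    rintro z ⟨n, hn, hzn⟩ ⟨j, hj, hzj⟩
    simp only at hzn hzj
    have hkn : 0 < (n:ℤ) := by exact_mod_cast hn
    have hkj : 0 < (j:ℤ) := by exact_mod_cast hj
    -- z = ⌊aφ⌋ = ⌊bφ⌋, a = ⌊nφ⌋ ∈ A, b = ⌊jφ⌋+j ∈ B
    set a : ℤ := ⌊((n:ℤ):ℝ) * phi⌋ with hA
    set b : ℤ := ⌊((j:ℤ):ℝ) * phi⌋ + (j:ℤ) with hB
    have ea : ⌊(a:ℝ) * phi⌋ = z := by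
      rw [hA, I1 (n:ℤ) hkn, castR, ← hzn]
    have eb : ⌊(b:ℝ) * phi⌋ = z := by
      rw [hB, I2 (j:ℤ) hkj, castR, ← hzj]
    have hab : a = b := floor_phi_strictMono.injective (ea.trans eb.symm)
    -- but a ∈ A-values, b ∈ B-values of a positive integer
    have hapos : 0 < a := floor_pos_phi (n:ℤ) hkn
    rcases rayleigh_phi a hapos with ⟨_, hnotB⟩ | ⟨_, hnotA⟩
    · exact hnotB ⟨(j:ℤ), hkj, hab.symm⟩
    · exact hnotA ⟨(n:ℤ), hkn, rfl⟩
  · -- V1 vs V3 : V1 ⊆ A-values, V3 ⊆ B-values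
    rw [Set.disjoint_left]
    rintro z ⟨n, hn, hzn⟩ ⟨j, hj, hzj⟩
    simp only at hzn hzj
    obtain ⟨m, hm, hmz⟩ := hV1 n hn
    obtain ⟨m', hm', hmz'⟩ := hV3 j hj
    have hzpos : 0 < z := by rw [← hzn]; exact hpos1 n hn
    rcases rayleigh_phi z hzpos with ⟨_, hnotB⟩ | ⟨_, hnotA⟩
    · exact hnotB ⟨m', hm', by rw [hmz', hzj]⟩
    · exact hnotA ⟨m, hm, by rw [hmz, hzn]⟩
  · -- V2 vs V3
    rw [Set.disjoint_left]
    rintro z ⟨n, hn, hzn⟩ ⟨j, hj, hzj⟩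
    simp only at hzn hzj
    obtain ⟨m, hm, hmz⟩ := hV2 n hn
    obtain ⟨m', hm', hmz'⟩ := hV3 j hj
    have hzpos : 0 < z := by rw [← hzn]; exact hpos2 n hn
    rcases rayleigh_phi z hzpos with ⟨_, hnotB⟩ | ⟨_, hnotA⟩
    · exact hnotB ⟨m', hm', by rw [hmz', hzj]⟩
    · exact hnotA ⟨m, hm, by rw [hmz, hzn]⟩
  · -- union = positives
    ext z
    simp only [Set.mem_union, Set.mem_setOf_eq]
    constructor
    · rintro ((⟨n, hn, rfl⟩ | ⟨n, hn, rfl⟩) | ⟨n, hn, rfl⟩)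
      · exact hpos1 n hn
      · exact hpos2 n hn
      · exact hpos3 n hn
    · intro hz
      rcases rayleigh_phi z hz with ⟨⟨m, hm, hmz⟩, _⟩ | ⟨⟨m, hm, hmz⟩, _⟩
      · -- z = ⌊mφ⌋ with m > 0 ; split m
        have hmpos : 0 < m := hm
        rcases rayleigh_phi m hmpos with ⟨⟨k, hk, hkm⟩, _⟩ | ⟨⟨k, hk, hkm⟩, _⟩
        · -- m = ⌊kφ⌋, so z = V1(k)
          left; left
          refine ⟨k.toNat, by omega, ?_⟩
          have hkn : ((k.toNat : ℕ) : ℝ) = (k : ℝ) := by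
            rw [← castR]; norm_cast; omega
          simp only [hkn]
          have : ⌊((⌊(k:ℝ) * phi⌋ : ℤ) : ℝ) * phi⌋ = z := by rw [hkm, hmz]
          rw [I1 k hk] at this
          omega
        · -- m = ⌊kφ⌋ + k, so z = V2(k)
          left; right
          refine ⟨k.toNat, by omega, ?_⟩
          have hkn : ((k.toNat : ℕ) : ℝ) = (k : ℝ) := by
            rw [← castR]; norm_cast; omega
          simp only [hkn]
          have : ⌊((⌊(k:ℝ) * phi⌋ + k : ℤ) : ℝ) * phi⌋ = z := by rw [hkm, hmz]
          rw [I2 k hk] at this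
          omega
      · -- z = ⌊mφ⌋ + m = V3(m)
        right
        refine ⟨m.toNat, by omega, ?_⟩
        have hkn : ((m.toNat : ℕ) : ℝ) = (m : ℝ) := by
          rw [← castR]; norm_cast; omega
        simp only [hkn]
        omega
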